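/- Let q be a prime power, m ≥ 1, and let S_0, …, S_{n-1} be F_q-subspaces of F_{q^m}, each of dimension λ. Suppose km > n(m − λ). If R is chosen uniformly at random among the F_{q^m}-linear codes of length n and dimension k over F_{q^m}, then for any integer ℓ, the probability that dim_{F_q}(R|_{(S_0,…,S_{n-1})}) ≥ km − n(m − λ) + ℓ is at most q^{−ℓ} · ( 1/(1 − q^{−mn}) + 1/q^{km − n(m−λ)} ). Equivalently, the number of k-dimensional F_{q^m}-subspaces R of F_{q^m}^n satisfying dim_{F_q}(R|_{(S_0,…,S_{n-1})}) ≥ km − n(m−λ) + ℓ is at most q^{−ℓ} · ( 1/(1 − q^{−mn}) + 1/q^{km − n(m−λ)} ) times the total number of k-dimensional F_{q^m}-subspaces of F_{q^m}^n. -/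

import Mathlib

open Module

/-- The subspace subcode of a code `C ⊆ F^n`, with respect to `K`-subspaces `S i ⊆ F`. -/
def subspaceSubcode {K F : Type*} [Field K] [Field F] [Algebra K F] {n : ℕ}
    (C : Submodule F (Fin n → F)) (S : Fin n → Submodule K F) :
    Submodule K (Fin n → F) :=
  C.restrictScalars K ⊓ Submodule.pi Set.univ S

open Finset

section Helpers
variable {F M : Type*} [Field F] [AddCommGroup M] [Module F M]

private lemma exists_lequiv {v w : M} (hv : v ≠ 0) (hw : w ≠ 0) :
    ∃ e : M ≃ₗ[F] M, e v = w := by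
  classical
  have hv' : LinearIndepOn F id ({v} : Set M) :=
    (linearIndepOn_singleton_iff F).2 hv
  have hw' : LinearIndepOn F id ({w} : Set M) :=
    (linearIndepOn_singleton_iff F).2 hw
  have hvmem : v ∈ hv'.extend (Set.subset_univ _) := hv'.subset_extend _ rfl
  have hwmem : w ∈ hw'.extend (Set.subset_univ _) := hw'.subset_extend _ rfl
  let b := Basis.extend hv'
  let c := Basis.extend hw'
  let e0 := b.indexEquiv c
  let e := e0.trans (Equiv.swap (e0 ⟨v, hvmem⟩) ⟨w, hwmem⟩)
  refine ⟨b.equiv c e, ?_⟩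
  have h1 : b ⟨v, hvmem⟩ = v := Basis.extend_apply_self _ _
  have h2 : b.equiv c e (b ⟨v, hvmem⟩) = c (e ⟨v, hvmem⟩) := b.equiv_apply _ c e
  rw [h1] at h2
  rw [h2]
  have h3 : e ⟨v, hvmem⟩ = ⟨w, hwmem⟩ := by simp [e]
  rw [h3]
  exact Basis.extend_apply_self _ _

private lemma card_fix_eq {k : ℕ} {v w : M} (hv : v ≠ 0) (hw : w ≠ 0) :
    Nat.card {R : Submodule F M // finrank F R = k ∧ v ∈ R}
      = Nat.card {R : Submodule F M // finrank F R = k ∧ w ∈ R} := by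
  obtain ⟨e, he⟩ := exists_lequiv (F := F) hv hw
  refine Nat.card_congr ((Submodule.orderIsoMapComap e).toEquiv.subtypeEquiv fun R => ?_)
  have h1 : finrank F (Submodule.map (e : M →ₗ[F] M) R) = finrank F R :=
    e.finrank_map_eq R
  have h2 : e.symm w = v := e.symm_apply_eq.2 he.symm
  constructor
  · rintro ⟨hr, hv'⟩
    refine ⟨h1.trans hr, ?_⟩
    show w ∈ Submodule.map (e : M →ₗ[F] M) R
    rw [Submodule.mem_map_equiv, h2]; exact hv'
  · rintro ⟨hr, hw'⟩
    have : e.symm w ∈ R := (Submodule.mem_map_equiv R).1 hw'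
    rw [h2] at this
    exact ⟨by rw [← h1]; exact hr, this⟩

private lemma nat_card_subtype {α : Type*} [Fintype α] (p : α → Prop) [DecidablePred p] :
    Nat.card {x // p x} = (univ.filter p).card := by
  rw [Nat.card_eq_fintype_card, Fintype.card_subtype]

private lemma card_filter_ne_zero {M : Type*} [Fintype M] [DecidableEq M] [Zero M]
    (p : M → Prop) [DecidablePred p] (h0 : p 0) :
    Nat.card {x // p x} = (univ.filter fun v => p v ∧ v ≠ 0).card + 1 := by
  rw [nat_card_subtype]
  have : univ.filter p = insert (0:M) (univ.filter fun v => p v ∧ v ≠ 0) := by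
    ext x; by_cases hx : x = 0 <;> simp [hx, h0]
  rw [this, card_insert_of_notMem (by simp)]

end Helpers

private lemma swap_count {M σ : Type*} [Fintype M] [Fintype σ]
    (p : σ → Prop) (r : M → σ → Prop) (s : M → Prop)
    [DecidablePred p] [DecidablePred s] [∀ v R, Decidable (r v R)] :
    ∑ v ∈ univ.filter s, ((univ.filter p).filter fun R => r v R).card
      = ∑ R ∈ univ.filter p, ((univ.filter s).filter fun v => r v R).card := by
  simp only [Finset.card_filter]
  exact Finset.sum_comm

set_option maxHeartbeats 2000000 in
/-- counting form: among the `k`-dimensional `F_{q^m}`-subspaces `R` of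
`F_{q^m}^n`, the proportion of those with
`dim_{F_q} R|_{(S_0,…,S_{n-1})} ≥ km - n(m-λ) + ℓ` is at most
`q^{-ℓ} (1/(1-q^{-mn}) + 1/q^{km-n(m-λ)})`. -/
theorem stmt_1 {K F : Type*} [Field K] [Fintype K] [Field F] [Algebra K F]
    [FiniteDimensional K F] {q n k m lam : ℕ} (hq : Fintype.card K = q)
    (hm : finrank K F = m) (hm1 : 1 ≤ m)
    (S : Fin n → Submodule K F) (hS : ∀ i, finrank K (S i) = lam) (hlm : lam ≤ m)
    (hkm : (n : ℤ) * ((m : ℤ) - lam) < (k : ℤ) * m) (ℓ : ℤ) :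
    (Nat.card {R : Submodule F (Fin n → F) //
        finrank F R = k ∧
        (k * m : ℤ) - n * ((m : ℤ) - lam) + ℓ ≤ (finrank K (subspaceSubcode R S) : ℤ)} : ℝ)
      ≤ (q : ℝ) ^ (-ℓ) *
        (1 / (1 - (q : ℝ) ^ (-((m : ℤ) * n))) +
          1 / (q : ℝ) ^ ((k * m : ℤ) - n * ((m : ℤ) - lam))) *
        (Nat.card {R : Submodule F (Fin n → F) // finrank F R = k} : ℝ) := by
  classical
  have hq2 : 2 ≤ q := by
    rw [← hq]; exact Fintype.one_lt_card
  have hk1 : 1 ≤ k := by nlinarith [hkm, Int.ofNat_nonneg n, Int.ofNat_nonneg m, Int.ofNat_nonneg lam]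
  haveI : Finite F := Module.finite_of_finite K
  letI : Fintype F := Fintype.ofFinite F
  have hcF : Fintype.card F = q ^ m := by
    rw [card_eq_pow_finrank (K := K) (V := F), hq, hm]
  by_cases hn : n = 0
  · subst hn
    have hem : ∀ R : Submodule F (Fin 0 → F), finrank F R ≠ k := by
      intro R hR
      have : finrank F R ≤ finrank F (Fin 0 → F) := Submodule.finrank_le R
      rw [Module.finrank_fin_fun] at this
      have h0 : finrank F R = 0 := Nat.le_zero.1 this
      omega
    have h1 : Nat.card {R : Submodule F (Fin 0 → F) // finrank F R = k} = 0 := by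
      have : IsEmpty {R : Submodule F (Fin 0 → F) // finrank F R = k} :=
        ⟨fun ⟨R, hR⟩ => hem R hR⟩
      exact Nat.card_of_isEmpty
    rw [h1]
    haveI h2 : IsEmpty {R : Submodule F (Fin 0 → F) //
        finrank F R = k ∧
        (k * m : ℤ) - ((0:ℕ):ℤ) * ((m : ℤ) - lam) + ℓ ≤ (finrank K (subspaceSubcode R S) : ℤ)} :=
      ⟨fun x => hem x.1 x.2.1⟩
    rw [Nat.card_of_isEmpty]
    simp
  -- main case: n ≥ 1
  push_neg at hn
  have hn1 : 1 ≤ n := Nat.one_le_iff_ne_zero.2 hn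
  haveI : Finite (Submodule F (Fin n → F)) :=
    Finite.of_injective (fun R => (R : Set (Fin n → F))) SetLike.coe_injective
  letI : Fintype (Submodule F (Fin n → F)) := Fintype.ofFinite _
  have hQ1 : (1:ℝ) < (q:ℝ) := by exact_mod_cast hq2.trans_lt' one_lt_two
  have hQ0 : (0:ℝ) < (q:ℝ) := lt_trans one_pos hQ1
  have hQne : (q:ℝ) ≠ 0 := ne_of_gt hQ0
  -- rewrite goal in terms of filter cards
  rw [nat_card_subtype, nat_card_subtype]
  set D : ℤ := (k * m : ℤ) - n * ((m : ℤ) - lam) with hDdef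
  have hD1 : 1 ≤ D := by rw [hDdef]; linarith
  set A : Finset (Submodule F (Fin n → F)) := univ.filter fun R => finrank F R = k with hA
  set Abad : Finset (Submodule F (Fin n → F)) :=
    univ.filter fun R =>
      finrank F R = k ∧ D + ℓ ≤ (finrank K (subspaceSubcode R S) : ℤ) with hAbad
  set V : Submodule K (Fin n → F) := Submodule.pi Set.univ S with hV
  have hmem_sub : ∀ (R : Submodule F (Fin n → F)) (v : Fin n → F),
      v ∈ subspaceSubcode R S ↔ v ∈ R ∧ v ∈ V := by
    intro R v
    simp [subspaceSubcode, Submodule.mem_inf, hV]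
  have hcM : Fintype.card (Fin n → F) = q ^ (m * n) := by
    rw [Fintype.card_fun, hcF, Fintype.card_fin, ← pow_mul]
  -- cardinality of a submodule via nonzero elements
  have hcard_mem : ∀ (W : Submodule F (Fin n → F)),
      Nat.card W = (univ.filter fun v => v ∈ W ∧ v ≠ 0).card + 1 :=
    fun W => card_filter_ne_zero (p := fun v => v ∈ W) W.zero_mem
  have hcard_memK : ∀ (W : Submodule K (Fin n → F)),
      Nat.card W = (univ.filter fun v => v ∈ W ∧ v ≠ 0).card + 1 :=
    fun W => card_filter_ne_zero (p := fun v => v ∈ W) W.zero_mem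
  have hNR : ∀ R : Submodule F (Fin n → F), finrank F R = k →
      (univ.filter fun v => v ∈ R ∧ v ≠ 0).card + 1 = q ^ (m * k) := by
    intro R hR
    rw [← hcard_mem R]
    letI : Fintype R := Fintype.ofFinite _
    rw [Nat.card_eq_fintype_card, card_eq_pow_finrank (K := F) (V := R), hcF, hR, ← pow_mul]
  have hsubcard : ∀ R : Submodule F (Fin n → F),
      Nat.card (subspaceSubcode R S) = q ^ (finrank K (subspaceSubcode R S)) := by
    intro R
    letI : Fintype (subspaceSubcode R S) := Fintype.ofFinite _
    rw [Nat.card_eq_fintype_card, card_eq_pow_finrank (K := K), hq]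
  have hVScard : ∀ i, Nat.card (S i) = q ^ lam := by
    intro i
    letI : Fintype (S i) := Fintype.ofFinite _
    rw [Nat.card_eq_fintype_card, card_eq_pow_finrank (K := K), hq, hS]
  have hVcard : Nat.card V = q ^ (n * lam) := by
    have e : V ≃ ∀ i, S i :=
      { toFun := fun x i => ⟨x.1 i, (Submodule.mem_pi.1 x.2) i (Set.mem_univ i)⟩
        invFun := fun f => ⟨fun i => (f i : F), Submodule.mem_pi.2 fun i _ => (f i).2⟩
        left_inv := fun x => rfl
        right_inv := fun f => rfl }
    rw [Nat.card_congr e, Nat.card_pi]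
    simp only [hVScard]
    rw [Finset.prod_const, Finset.card_univ, Fintype.card_fin, ← pow_mul, mul_comm lam n]
  -- symmetry of the per-vector counts
  have hNveq : ∀ v w : Fin n → F, v ≠ 0 → w ≠ 0 →
      (univ.filter fun R : Submodule F (Fin n → F) => finrank F R = k ∧ v ∈ R).card
        = (univ.filter fun R : Submodule F (Fin n → F) => finrank F R = k ∧ w ∈ R).card := by
    intro v w hv hw
    have := card_fix_eq (F := F) (k := k) hv hw
    rwa [nat_card_subtype, nat_card_subtype] at this
  -- global double count
  set eR : ℕ := q ^ (m * k) - 1 with heRdef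
  have heR : eR + 1 = q ^ (m * k) :=
    Nat.succ_pred_eq_of_pos (pow_pos (by omega) _)
  have hswap1 : ∑ v ∈ univ.filter (fun v : Fin n → F => v ≠ 0),
      (univ.filter fun R : Submodule F (Fin n → F) => finrank F R = k ∧ v ∈ R).card
      = ∑ R ∈ A, (univ.filter fun v : Fin n → F => v ≠ 0 ∧ v ∈ R).card := by
    rw [hA]
    have := swap_count (M := Fin n → F) (σ := Submodule F (Fin n → F))
      (p := fun R => finrank F R = k) (r := fun v R => v ∈ R) (s := fun v => v ≠ 0)
    simp only [Finset.filter_filter] at this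
    exact this
  have hglobal : ∑ v ∈ univ.filter (fun v : Fin n → F => v ≠ 0),
      (univ.filter fun R : Submodule F (Fin n → F) => finrank F R = k ∧ v ∈ R).card
      = A.card * eR := by
    rw [hswap1]
    rw [Finset.sum_congr rfl (fun R hR => ?_), Finset.sum_const, smul_eq_mul]
    have hRk : finrank F R = k := by
      rw [hA] at hR; exact (Finset.mem_filter.1 hR).2
    have h1 := hNR R hRk
    have h2 : (univ.filter fun v : Fin n → F => v ≠ 0 ∧ v ∈ R) =
        (univ.filter fun v : Fin n → F => v ∈ R ∧ v ≠ 0) :=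
      Finset.filter_congr fun x _ => by tauto
    rw [h2]
    omega
  -- number of nonzero vectors
  have hN0 : (univ.filter (fun v : Fin n → F => v ≠ 0)).card + 1 = q ^ (m * n) := by
    rw [Finset.filter_ne', Finset.card_erase_of_mem (Finset.mem_univ _), Finset.card_univ, hcM]
    have : 1 ≤ q ^ (m * n) := Nat.one_le_iff_ne_zero.2 (pow_ne_zero _ (by omega))
    omega
  -- per-vector count equation
  have hperv : ∀ v : Fin n → F, v ≠ 0 →
      (univ.filter fun R : Submodule F (Fin n → F) => finrank F R = k ∧ v ∈ R).card
        * (univ.filter (fun v : Fin n → F => v ≠ 0)).card = A.card * eR := by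
    intro v hv
    calc (univ.filter fun R : Submodule F (Fin n → F) => finrank F R = k ∧ v ∈ R).card
        * (univ.filter (fun v : Fin n → F => v ≠ 0)).card
        = ∑ w ∈ univ.filter (fun v : Fin n → F => v ≠ 0),
            (univ.filter fun R : Submodule F (Fin n → F) => finrank F R = k ∧ w ∈ R).card := by
          rw [Finset.sum_congr rfl
            (fun w hw => (hNveq w v (Finset.mem_filter.1 hw).2 hv)), Finset.sum_const,
            smul_eq_mul, mul_comm]
      _ = A.card * eR := hglobal
  -- restricted (to V) sum
  set zV : ℕ := (univ.filter fun v : Fin n → F => v ∈ V ∧ v ≠ 0).card with hzVdef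
  have hzV : zV + 1 = q ^ (n * lam) := by rw [hzVdef, ← hcard_memK V, hVcard]
  set Cv : ℕ := ∑ v ∈ univ.filter (fun v : Fin n → F => v ∈ V ∧ v ≠ 0),
      (univ.filter fun R : Submodule F (Fin n → F) => finrank F R = k ∧ v ∈ R).card with hCvdef
  have hCvN0 : Cv * (univ.filter (fun v : Fin n → F => v ≠ 0)).card = zV * (A.card * eR) := by
    rw [hCvdef, Finset.sum_mul]
    rw [Finset.sum_congr rfl (fun v hv => hperv v (Finset.mem_filter.1 hv).2.2),
      Finset.sum_const, smul_eq_mul]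
  -- sum of subcode sizes
  have hswap2 : ∑ R ∈ A, (univ.filter fun v : Fin n → F =>
        v ∈ subspaceSubcode R S ∧ v ≠ 0).card = Cv := by
    rw [hCvdef, hA]
    have h0 : ∀ R ∈ (univ.filter fun R : Submodule F (Fin n → F) => finrank F R = k),
        (univ.filter fun v : Fin n → F => v ∈ subspaceSubcode R S ∧ v ≠ 0).card
          = (univ.filter fun v : Fin n → F => (v ∈ V ∧ v ≠ 0) ∧ v ∈ R).card := by
      intro R _
      congr 1
      refine Finset.filter_congr fun v _ => ?_
      rw [hmem_sub]
      tauto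
    rw [Finset.sum_congr rfl h0]
    have := swap_count (M := Fin n → F) (σ := Submodule F (Fin n → F))
      (p := fun R => finrank F R = k) (r := fun v R => v ∈ R)
      (s := fun v => v ∈ V ∧ v ≠ 0)
    simp only [Finset.filter_filter] at this
    exact this.symm
  have hsum_sub : ∑ R ∈ A, Nat.card (subspaceSubcode R S) = Cv + A.card := by
    rw [Finset.sum_congr rfl (fun R _ => hcard_memK (subspaceSubcode R S)),
      Finset.sum_add_distrib, Finset.sum_const, smul_eq_mul, mul_one, hswap2]
  -- Markov step over the reals
  have hAbadA : Abad ⊆ A := by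
    rw [hA, hAbad]
    exact Finset.monotone_filter_right _ (fun R _ h => h.1)
  have hmarkov : (Abad.card : ℝ) * (q:ℝ) ^ (D + ℓ) ≤ ((Cv + A.card : ℕ) : ℝ) := by
    rw [← hsum_sub]
    push_cast
    calc (Abad.card : ℝ) * (q:ℝ) ^ (D + ℓ)
        = ∑ _R ∈ Abad, (q:ℝ) ^ (D + ℓ) := by rw [Finset.sum_const, nsmul_eq_mul]
      _ ≤ ∑ R ∈ Abad, (Nat.card (subspaceSubcode R S) : ℝ) := by
          refine Finset.sum_le_sum fun R hR => ?_
          have hRb : D + ℓ ≤ (finrank K (subspaceSubcode R S) : ℤ) := by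
            rw [hAbad] at hR; exact (Finset.mem_filter.1 hR).2.2
          calc (q:ℝ) ^ (D + ℓ) ≤ (q:ℝ) ^ ((finrank K (subspaceSubcode R S) : ℤ)) :=
                zpow_le_zpow_right₀ hQ1.le hRb
            _ = (Nat.card (subspaceSubcode R S) : ℝ) := by
                rw [zpow_natCast, hsubcard R]
                push_cast
                try rfl
                try ring
      _ ≤ ∑ R ∈ A, (Nat.card (subspaceSubcode R S) : ℝ) :=
          Finset.sum_le_sum_of_subset_of_nonneg hAbadA (fun _ _ _ => by positivity)
  -- final algebra
  have hpow : (0:ℝ) < (q:ℝ) ^ (D + ℓ) := zpow_pos hQ0 _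
  refine le_of_mul_le_mul_right (le_trans hmarkov ?_) hpow
  set Qr : ℝ := (q : ℝ) with hQr
  set t : ℝ := Qr ^ (m * n) with htdef
  have htz : Qr ^ ((m : ℤ) * n) = t := by
    rw [htdef, ← zpow_natCast]
    norm_cast
  have hs : Qr ^ (-((m : ℤ) * n)) = t⁻¹ := by rw [zpow_neg, htz]
  have ht2 : (2:ℝ) ≤ t := by
    rw [htdef]
    calc (2:ℝ) ≤ Qr := by rw [hQr]; exact_mod_cast hq2
      _ = Qr ^ 1 := (pow_one _).symm
      _ ≤ Qr ^ (m * n) := by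
        refine pow_le_pow_right₀ ?_ (Nat.one_le_iff_ne_zero.2 (Nat.mul_ne_zero (by omega) (by omega)))
        rw [hQr]; exact hQ1.le
  have ht0 : (0:ℝ) < t - 1 := by linarith
  have htpos : (0:ℝ) < t := by linarith
  have htne : t ≠ 0 := ne_of_gt htpos
  have hts : (0:ℝ) < 1 - t⁻¹ := by
    have h1 : t⁻¹ < 1 := by
      rw [inv_lt_one_iff₀]
      right; linarith
    linarith
  have htsne : (1:ℝ) - t⁻¹ ≠ 0 := ne_of_gt hts
  have hQD : Qr ^ D ≠ 0 := zpow_ne_zero _ hQne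
  -- cast the counting identities to ℝ
  have hN0r : ((univ.filter (fun v : Fin n → F => v ≠ 0)).card : ℝ) = t - 1 := by
    have h := hN0
    have : ((univ.filter (fun v : Fin n → F => v ≠ 0)).card : ℝ) + 1 = t := by
      rw [htdef, hQr]
      exact_mod_cast congrArg (Nat.cast : ℕ → ℝ) h
    linarith
  have hzVr : (zV:ℝ) ≤ Qr ^ (n * lam) := by
    have : (zV:ℝ) + 1 = Qr ^ (n * lam) := by rw [hQr]; exact_mod_cast congrArg (Nat.cast : ℕ → ℝ) hzV
    linarith
  have heRr : (eR:ℝ) ≤ Qr ^ (m * k) := by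
    have : (eR:ℝ) + 1 = Qr ^ (m * k) := by rw [hQr]; exact_mod_cast congrArg (Nat.cast : ℕ → ℝ) heR
    linarith
  have hCvr : (Cv:ℝ) * (t - 1) = (zV:ℝ) * ((A.card:ℝ) * (eR:ℝ)) := by
    rw [← hN0r]
    exact_mod_cast congrArg (Nat.cast : ℕ → ℝ) hCvN0
  have hDexp : Qr ^ D * t = Qr ^ (n * lam) * Qr ^ (m * k) := by
    rw [← htz, ← zpow_add₀ hQne, ← pow_add, ← zpow_natCast Qr (n * lam + m * k)]
    congr 1
    rw [hDdef]
    push_cast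
    ring
  have hCvbound : (Cv:ℝ) * (t - 1) ≤ Qr ^ D * t * (A.card : ℝ) := by
    rw [hCvr, hDexp]
    have h1 : (zV:ℝ) * ((A.card:ℝ) * (eR:ℝ)) ≤ Qr ^ (n * lam) * ((A.card:ℝ) * (eR:ℝ)) :=
      mul_le_mul_of_nonneg_right hzVr (by positivity)
    have h2 : Qr ^ (n * lam) * ((A.card:ℝ) * (eR:ℝ))
        ≤ Qr ^ (n * lam) * ((A.card:ℝ) * Qr ^ (m * k)) :=
      mul_le_mul_of_nonneg_left (mul_le_mul_of_nonneg_left heRr (by positivity)) (by positivity)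
    calc (zV:ℝ) * ((A.card:ℝ) * (eR:ℝ)) ≤ Qr ^ (n * lam) * ((A.card:ℝ) * Qr ^ (m * k)) :=
          le_trans h1 h2
      _ = Qr ^ (n * lam) * Qr ^ (m * k) * (A.card:ℝ) := by ring
  have hkey : (Cv:ℝ) * (1 - t⁻¹) ≤ Qr ^ D * (A.card : ℝ) := by
    rw [← mul_le_mul_iff_left₀ htpos]
    calc (Cv:ℝ) * (1 - t⁻¹) * t = (Cv:ℝ) * (t - 1) := by field_simp
      _ ≤ Qr ^ D * t * (A.card:ℝ) := hCvbound
      _ = Qr ^ D * (A.card:ℝ) * t := by ring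
  have e1 : Qr ^ (-ℓ) * Qr ^ (D + ℓ) = Qr ^ D := by
    rw [← zpow_add₀ hQne]
    congr 1
    ring
  push_cast
  rw [hs]
  have hrhs : Qr ^ (-ℓ) * (1/(1 - t⁻¹) + 1/Qr ^ D) * (A.card:ℝ) * Qr ^ (D + ℓ)
      = Qr ^ D * (1 - t⁻¹)⁻¹ * (A.card:ℝ) + (A.card:ℝ) := by
    have h : Qr ^ (-ℓ) * (1/(1 - t⁻¹) + 1/Qr ^ D) * (A.card:ℝ) * Qr ^ (D + ℓ)
        = (1/(1 - t⁻¹) + 1/Qr ^ D) * (A.card:ℝ) * (Qr ^ (-ℓ) * Qr ^ (D + ℓ)) := by ring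
    rw [h, e1]
    field_simp
  rw [hrhs]
  have hCvle : (Cv:ℝ) ≤ Qr ^ D * (1 - t⁻¹)⁻¹ * (A.card:ℝ) := by
    rw [← mul_le_mul_iff_left₀ hts]
    calc (Cv:ℝ) * (1 - t⁻¹) ≤ Qr ^ D * (A.card:ℝ) := hkey
      _ = Qr ^ D * (1 - t⁻¹)⁻¹ * (A.card:ℝ) * (1 - t⁻¹) := by field_simp
  linarith
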